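/- Let Ω be a finite set, E a proper nonempty subset of Ω, u: Ω → ℝ with u non-constant on Ω∖E, and β ∈ ℝ with β < u(ω) for all ω. With φ and ≼_φ defined as in the unacceptable-risk example, ≼_φ does not satisfy interpolation: there exist distributions A ≼_φ B ≼_φ C such that no α ∈ [0,1] makes αA+(1−α)C ≼_φ-equivalent to B. -/
import Mathlib


open Finset

/-- `p` is a probability mass function on the finite type `X`. -/
def IsDist {X : Type*} [Fintype X] (p : X → ℝ) : Prop :=
  (∀ x, 0 ≤ p x) ∧ ∑ x, p x = 1

/-- Pointwise convex combination of two (distributions viewed as) functions. -/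
def mix {X : Type*} (α : ℝ) (A B : X → ℝ) : X → ℝ :=
  fun x => α * A x + (1 - α) * B x

open Classical in
/-- The unacceptable-risk performance function. -/
noncomputable def riskPhi {Ω : Type*} [Fintype Ω] (E : Finset Ω) (u : Ω → ℝ) (β : ℝ)
    (A : Ω → ℝ) : ℝ :=
  if (∑ ω ∈ E, A ω) = 0 then ∑ ω, u ω * A ω else β * Real.exp (∑ ω ∈ E, A ω)

open Classical in
/-- Dirac delta distribution. -/
noncomputable def rdelta {Ω : Type*} (x : Ω) : Ω → ℝ := fun ω => if ω = x then 1 else 0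

lemma sum_rdelta_mem {Ω : Type*} [Fintype Ω] {E : Finset Ω} {x : Ω} (hx : x ∈ E) :
    ∑ ω ∈ E, rdelta x ω = 1 := by
  rw [Finset.sum_eq_single_of_mem x hx]
  · simp [rdelta]
  · intro b _ hb; simp [rdelta, hb]

lemma sum_rdelta_notMem {Ω : Type*} [Fintype Ω] {E : Finset Ω} {x : Ω} (hx : x ∉ E) :
    ∑ ω ∈ E, rdelta x ω = 0 := by
  apply Finset.sum_eq_zero
  intro b hb
  have hbx : b ≠ x := by rintro rfl; exact hx hb
  simp [rdelta, hbx]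

lemma sum_mul_rdelta {Ω : Type*} [Fintype Ω] (u : Ω → ℝ) (x : Ω) :
    ∑ ω, u ω * rdelta x ω = u x := by
  rw [Finset.sum_eq_single x]
  · simp [rdelta]
  · intro b _ hb; simp [rdelta, hb]
  · intro h; exact absurd (Finset.mem_univ x) h

lemma isDist_rdelta {Ω : Type*} [Fintype Ω] (x : Ω) : IsDist (rdelta x) := by
  constructor
  · intro ω; unfold rdelta; split <;> norm_num
  · exact sum_rdelta_mem (Finset.mem_univ x)

lemma isDist_mix {Ω : Type*} [Fintype Ω] {α : ℝ} (h0 : 0 ≤ α) (h1 : α ≤ 1)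
    {A B : Ω → ℝ} (hA : IsDist A) (hB : IsDist B) : IsDist (mix α A B) := by
  constructor
  · intro x
    have := hA.1 x; have := hB.1 x
    have : 0 ≤ 1 - α := by linarith
    unfold mix; positivity
  · simp [mix, Finset.sum_add_distrib, ← Finset.mul_sum, hA.2, hB.2]

lemma sum_mix {Ω : Type*} [Fintype Ω] (E : Finset Ω) (α : ℝ) (A B : Ω → ℝ) :
    ∑ ω ∈ E, mix α A B ω = α * ∑ ω ∈ E, A ω + (1 - α) * ∑ ω ∈ E, B ω := by
  simp [mix, Finset.sum_add_distrib, Finset.mul_sum]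

lemma riskPhi_rdelta_notMem {Ω : Type*} [Fintype Ω] (E : Finset Ω) (u : Ω → ℝ) (β : ℝ)
    {x : Ω} (hx : x ∉ E) : riskPhi E u β (rdelta x) = u x := by
  rw [riskPhi, if_pos (sum_rdelta_notMem hx), sum_mul_rdelta]

lemma riskPhi_of_sum_ne {Ω : Type*} [Fintype Ω] (E : Finset Ω) (u : Ω → ℝ) (β : ℝ)
    {A : Ω → ℝ} (h : (∑ ω ∈ E, A ω) ≠ 0) :
    riskPhi E u β A = β * Real.exp (∑ ω ∈ E, A ω) := by
  rw [riskPhi, if_neg h]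

lemma mix_zero {Ω : Type*} (A B : Ω → ℝ) : mix 0 A B = B := by
  funext x; simp [mix]

/-- Auxiliary version of the theorem with explicit witnesses. -/
theorem aux_no_interp {Ω : Type*} [Fintype Ω]
    (E : Finset Ω) (u : Ω → ℝ) (β : ℝ) (hβ : ∀ ω, β < u ω)
    (e₀ : Ω) (he : e₀ ∈ E) (x y : Ω) (hx : x ∉ E) (hy : y ∉ E) (hxy : u x < u y) :
    ∃ A B C : Ω → ℝ, IsDist A ∧ IsDist B ∧ IsDist C ∧
      riskPhi E u β A ≤ riskPhi E u β B ∧ riskPhi E u β B ≤ riskPhi E u β C ∧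
      ∀ α : ℝ, 0 ≤ α → α ≤ 1 → ¬ riskPhi E u β (mix α A C) = riskPhi E u β B := by
  classical
  rcases le_or_gt β 0 with hβ0 | hβ0
  · -- β ≤ 0 : A = δ e₀, B = δ x, C = δ y
    refine ⟨rdelta e₀, rdelta x, rdelta y, isDist_rdelta _, isDist_rdelta _, isDist_rdelta _,
      ?_, ?_, ?_⟩
    · rw [riskPhi_of_sum_ne E u β (by rw [sum_rdelta_mem he]; norm_num),
        riskPhi_rdelta_notMem E u β hx, sum_rdelta_mem he]
      have h1 : Real.exp 1 ≥ 1 := by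
        have := Real.add_one_le_exp (1:ℝ); linarith
      have : β * Real.exp 1 ≤ β := by nlinarith
      linarith [hβ x]
    · rw [riskPhi_rdelta_notMem E u β hx, riskPhi_rdelta_notMem E u β hy]
      linarith
    · intro α hα0 hα1
      rw [riskPhi_rdelta_notMem E u β hx]
      rcases eq_or_lt_of_le hα0 with h0 | h0
      · rw [← h0, mix_zero, riskPhi_rdelta_notMem E u β hy]
        exact ne_of_gt hxy
      · have hsum : ∑ ω ∈ E, mix α (rdelta e₀) (rdelta y) ω = α := by
          rw [sum_mix, sum_rdelta_mem he, sum_rdelta_notMem hy]; ring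
        rw [riskPhi_of_sum_ne E u β (by rw [hsum]; exact ne_of_gt h0), hsum]
        have h1 : (1:ℝ) ≤ Real.exp α := Real.one_le_exp hα0
        have : β * Real.exp α ≤ β := by nlinarith
        have := hβ x
        intro h; linarith
  · -- β > 0
    have hMβ : 1 < u y / β := (one_lt_div hβ0).mpr (hβ y)
    set L : ℝ := Real.log (u y / β) with hL
    have hL0 : 0 < L := Real.log_pos hMβ
    set b : ℝ := min 1 L / 2 with hb
    have hb0 : 0 < b := by positivity
    have hb1 : b ≤ 1 / 2 := by
      have : min 1 L ≤ 1 := min_le_left _ _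
      simp only [hb]; linarith
    set a : ℝ := b / 2 with ha
    have ha0 : 0 < a := by positivity
    have hab : a < b := by simp only [ha]; linarith
    have hbM : β * Real.exp b < u y := by
      have hbL : b < L := by
        have : min 1 L ≤ L := min_le_right _ _
        simp only [hb]; linarith
      have : Real.exp b < Real.exp L := Real.exp_lt_exp.mpr hbL
      have hexpL : Real.exp L = u y / β := Real.exp_log (by positivity)
      calc β * Real.exp b < β * (u y / β) := by nlinarith
        _ = u y := by field_simp
    have hsA : ∑ ω ∈ E, mix a (rdelta e₀) (rdelta x) ω = a := by
      rw [sum_mix, sum_rdelta_mem he, sum_rdelta_notMem hx]; ring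
    have hsB : ∑ ω ∈ E, mix b (rdelta e₀) (rdelta x) ω = b := by
      rw [sum_mix, sum_rdelta_mem he, sum_rdelta_notMem hx]; ring
    -- A, B mix masses a, b on e₀, rest on x ; C = δ y
    refine ⟨mix a (rdelta e₀) (rdelta x), mix b (rdelta e₀) (rdelta x), rdelta y,
      isDist_mix ha0.le (by linarith) (isDist_rdelta _) (isDist_rdelta _),
      isDist_mix hb0.le (by linarith) (isDist_rdelta _) (isDist_rdelta _),
      isDist_rdelta _, ?_, ?_, ?_⟩
    · rw [riskPhi_of_sum_ne E u β (by rw [hsA]; exact ne_of_gt ha0),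
        riskPhi_of_sum_ne E u β (by rw [hsB]; exact ne_of_gt hb0), hsA, hsB]
      have : Real.exp a ≤ Real.exp b := Real.exp_le_exp.mpr hab.le
      nlinarith
    · rw [riskPhi_of_sum_ne E u β (by rw [hsB]; exact ne_of_gt hb0), hsB,
        riskPhi_rdelta_notMem E u β hy]
      exact hbM.le
    · intro α hα0 hα1
      rw [riskPhi_of_sum_ne E u β (A := mix b (rdelta e₀) (rdelta x))
        (by rw [hsB]; exact ne_of_gt hb0), hsB]
      rcases eq_or_lt_of_le hα0 with h0 | h0
      · rw [← h0, mix_zero, riskPhi_rdelta_notMem E u β hy]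
        exact fun h => absurd h.symm (ne_of_lt hbM)
      · have hsum : ∑ ω ∈ E, mix α (mix a (rdelta e₀) (rdelta x)) (rdelta y) ω = α * a := by
          rw [sum_mix, hsA, sum_rdelta_notMem hy]; ring
        have hαa : 0 < α * a := mul_pos h0 ha0
        rw [riskPhi_of_sum_ne E u β (by rw [hsum]; exact ne_of_gt hαa), hsum]
        have h1 : α * a < b := by nlinarith
        have : Real.exp (α * a) < Real.exp b := Real.exp_lt_exp.mpr h1
        intro h; nlinarith

/-- `≼_φ` does not satisfy interpolation. -/
theorem riskPhi_no_interpolation {Ω : Type*} [Fintype Ω]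
    (E : Finset Ω) (hE : E.Nonempty) (hEproper : E ≠ Finset.univ)
    (u : Ω → ℝ)
    (hu : ∃ ω₁ ∉ E, ∃ ω₂ ∉ E, u ω₁ ≠ u ω₂)
    (β : ℝ) (hβ : ∀ ω, β < u ω) :
    ∃ A B C : Ω → ℝ, IsDist A ∧ IsDist B ∧ IsDist C ∧
      riskPhi E u β A ≤ riskPhi E u β B ∧ riskPhi E u β B ≤ riskPhi E u β C ∧
      ∀ α : ℝ, 0 ≤ α → α ≤ 1 → ¬ riskPhi E u β (mix α A C) = riskPhi E u β B := by
  obtain ⟨e₀, he⟩ := hE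
  obtain ⟨ω₁, h1, ω₂, h2, hne⟩ := hu
  rcases hne.lt_or_gt with h | h
  · exact aux_no_interp E u β hβ e₀ he ω₁ ω₂ h1 h2 h
  · exact aux_no_interp E u β hβ e₀ he ω₂ ω₁ h2 h1 h
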